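/- For a compact set F ⊂ D = {(x,y) : |y| < x, |y| < 2-x} ⊂ ℂ and t > 0, there exists a constant C > 0 such that Σ_{n∈ℤ} (∫₀ᵗ |∂ₓK(z + 2n, t-τ)|² dτ)^{1/2} ≤ C for all z ∈ F, where ∂ₓK(z,s) = -z/(4√π s^{3/2}) e^{-z²/(4s)}. -/

import Mathlib

set_option maxHeartbeats 1000000


open Complex MeasureTheory

/-- The open square `D` with vertices `0, 1+i, 2, 1-i`, viewed in `ℂ`. -/
def Dsq : Set ℂ := {z : ℂ | |z.im| < z.re ∧ |z.im| < 2 - z.re}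

/-- `∂ₓK(z,s) = -z/(4√π s^{3/2}) e^{-z²/(4s)}`. -/
noncomputable def dxK (z : ℂ) (t : ℝ) : ℂ :=
  -z / (4 * Real.sqrt Real.pi * (t ^ ((3:ℝ)/2) : ℝ)) * Complex.exp (-z ^ 2 / (4 * (t : ℂ)))

lemma norm_dxK_sq (w : ℂ) {s : ℝ} (hs : 0 < s) :
    ‖dxK w s‖ ^ 2 = ‖w‖^2 / (16 * Real.pi * s^3) * Real.exp (-(w^2).re/(2*s)) := by
  have hπ : (0:ℝ) < Real.pi := Real.pi_pos
  have hsr : (0:ℝ) < s ^ ((3:ℝ)/2) := Real.rpow_pos_of_pos hs _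
  have hre : (-w^2 / (4 * (s:ℂ))).re = -(w^2).re/(4*s) := by
    have : (4 * (s:ℂ)) = ((4*s : ℝ) : ℂ) := by push_cast; ring
    rw [this, Complex.div_ofReal_re]
    simp
  have hden : ‖(4 * (Real.sqrt Real.pi : ℂ) * ((s ^ ((3:ℝ)/2) : ℝ) : ℂ))‖
      = 4 * Real.sqrt Real.pi * s ^ ((3:ℝ)/2) := by
    have : (4 * (Real.sqrt Real.pi : ℂ) * ((s ^ ((3:ℝ)/2) : ℝ) : ℂ))
        = ((4 * Real.sqrt Real.pi * s ^ ((3:ℝ)/2) : ℝ) : ℂ) := by push_cast; ring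
    rw [this, Complex.norm_real, Real.norm_eq_abs, abs_of_pos]
    positivity
  rw [dxK, norm_mul, norm_div, norm_neg, hden,
    show ‖Complex.exp (-w^2/(4*(s:ℂ)))‖ = Real.exp ((-w^2/(4*(s:ℂ))).re) from by
      rw [Complex.norm_exp], hre]
  have hsq : (s ^ ((3:ℝ)/2))^2 = s^3 := by
    rw [← Real.rpow_natCast (s ^ ((3:ℝ)/2)) 2, ← Real.rpow_mul hs.le,
      show ((3:ℝ)/2) * ((2:ℕ):ℝ) = ((3:ℕ):ℝ) by norm_num, Real.rpow_natCast]
  have hexp : Real.exp (-(w^2).re/(4*s)) ^ 2 = Real.exp (-(w^2).re/(2*s)) := by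
    rw [← Real.exp_nat_mul]
    congr 1
    field_simp
    ring
  rw [mul_pow, div_pow, hexp, mul_pow, mul_pow, hsq, Real.sq_sqrt hπ.le]
  ring

lemma cube_le_exp {u : ℝ} (hu : 0 ≤ u) : (u/3)^3 ≤ Real.exp u := by
  have h1 : u/3 ≤ Real.exp (u/3) := by nlinarith [Real.add_one_le_exp (u/3)]
  calc (u/3)^3 ≤ Real.exp (u/3) ^ 3 := pow_le_pow_left₀ (by positivity) h1 3
    _ = Real.exp u := by rw [← Real.exp_nat_mul]; norm_num; ring_nf

lemma dxK_sq_le (w : ℂ) {a s t : ℝ} (ha : (w^2).re = a) (hap : 0 < a)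
    (hs : 0 < s) (hst : s ≤ t) :
    ‖dxK w s‖^2 ≤ ‖w‖^2/(16*Real.pi) * (12/a)^3 * Real.exp (-(a/(4*t))) := by
  have hπ : (0:ℝ) < Real.pi := Real.pi_pos
  have ht : (0:ℝ) < t := lt_of_lt_of_le hs hst
  have e1 : Real.exp (-a/(2*s)) = Real.exp (-a/(4*s)) * Real.exp (-a/(4*s)) := by
    rw [← Real.exp_add]; congr 1; field_simp; ring
  have e2 : Real.exp (-a/(4*s)) ≤ Real.exp (-a/(4*t)) := by
    apply Real.exp_le_exp.mpr
    rw [neg_div, neg_div, neg_le_neg_iff]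
    gcongr a / ?_
    linarith
  have e3 : Real.exp (-a/(4*s)) ≤ (12*s/a)^3 := by
    have h := cube_le_exp (u := a/(4*s)) (by positivity)
    have h2 : (a/(4*s)/3)^3 = ((12*s/a)^3)⁻¹ := by
      rw [← inv_pow]; congr 1; field_simp; ring
    rw [neg_div, Real.exp_neg]
    rw [h2] at h
    have h3 : (0:ℝ) < (12*s/a)^3 := by positivity
    calc (Real.exp (a/(4*s)))⁻¹ ≤ (((12*s/a)^3)⁻¹)⁻¹ := by
          apply inv_anti₀ (by positivity) h
      _ = (12*s/a)^3 := inv_inv _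
  rw [norm_dxK_sq w hs, ha]
  calc ‖w‖^2 / (16*Real.pi*s^3) * Real.exp (-a/(2*s))
      = ‖w‖^2 / (16*Real.pi*s^3) * (Real.exp (-a/(4*s)) * Real.exp (-a/(4*s))) := by rw [e1]
    _ ≤ ‖w‖^2 / (16*Real.pi*s^3) * ((12*s/a)^3 * Real.exp (-a/(4*t))) := by
        apply mul_le_mul_of_nonneg_left _ (by positivity)
        exact mul_le_mul e3 e2 (Real.exp_pos _).le (by positivity)
    _ = ‖w‖^2/(16*Real.pi) * (12/a)^3 * Real.exp (-(a/(4*t))) := by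
        rw [neg_div]
        field_simp

lemma a_lb {x y δ : ℝ} (hδ0 : 0 < δ) (hδ1 : δ ≤ 1) (h1 : δ ≤ x - |y|) (h2 : δ ≤ 2 - x - |y|)
    (n : ℤ) : δ^2 * (1 + (n:ℝ)^2) / 4 ≤ (x + 2*(n:ℝ))^2 - y^2 := by
  have hy0 : 0 ≤ |y| := abs_nonneg y
  have hyabs : y^2 = |y|^2 := (_root_.sq_abs y).symm
  have hy1 : |y| ≤ 1 - δ := by linarith
  have hy2 : y^2 ≤ (1-δ)^2 := by rw [hyabs]; exact pow_le_pow_left₀ hy0 hy1 2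
  have hx1 : δ ≤ x := by linarith
  have hx2 : x ≤ 2 - δ := by linarith
  have hd2 : δ^2 ≤ 1 := by nlinarith
  have hd2n : δ^2 * (n:ℝ)^2 ≤ (n:ℝ)^2 := by nlinarith [sq_nonneg (n:ℝ)]
  rcases le_or_gt 1 n with hn | hn
  · have hm : (1:ℝ) ≤ (n:ℝ) := by exact_mod_cast hn
    have key : (δ + 2*(n:ℝ))^2 ≤ (x + 2*(n:ℝ))^2 := by nlinarith
    nlinarith [sq_nonneg ((n:ℝ) - 1)]
  · rcases le_or_gt n (-2) with hn2 | hn2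
    · have hm : (n:ℝ) ≤ -2 := by exact_mod_cast hn2
      have key : (2*(n:ℝ) + 2)^2 ≤ (x + 2*(n:ℝ))^2 := by
        nlinarith [mul_nonneg (show (0:ℝ) ≤ 2 - x by linarith)
          (show (0:ℝ) ≤ -(x + 4*(n:ℝ) + 2) by linarith)]
      nlinarith [sq_nonneg ((n:ℝ) + 2)]
    · interval_cases n
      · push_cast
        have key : (δ + |y|)^2 ≤ (2 - x)^2 := by nlinarith
        nlinarith [mul_nonneg hδ0.le hy0]
      · push_cast
        have key : (δ + |y|)^2 ≤ x^2 := by nlinarith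
        nlinarith [mul_nonneg hδ0.le hy0]

lemma coeff_eq {tt p d u : ℝ} (hp : p ≠ 0) (hd : d ≠ 0) (hu : u ≠ 0) :
    tt * ((4*u)^2/(16*p) * (48/(d*u))^3) = (tt/p * (48/d)^3) / u := by
  field_simp
  ring


/-- For a compact `F ⊆ D` and `t > 0`, the series over `n ∈ ℤ` of the `L²(0,t)`-norms
of `τ ↦ ∂ₓK(z+2n, t-τ)` is uniformly bounded on `F`. -/
theorem sum_L2_norms_uniformly_bounded (F : Set ℂ) (hF : IsCompact F) (hFD : F ⊆ Dsq)
    (t : ℝ) (ht : 0 < t) :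
    ∃ C : ℝ, 0 < C ∧ ∀ z ∈ F,
      Summable (fun n : ℤ =>
        (∫ τ in Set.Ioo (0:ℝ) t, ‖dxK (z + 2 * (n : ℂ)) (t - τ)‖ ^ 2) ^ ((1:ℝ)/2)) ∧
      (∑' n : ℤ,
        (∫ τ in Set.Ioo (0:ℝ) t, ‖dxK (z + 2 * (n : ℂ)) (t - τ)‖ ^ 2) ^ ((1:ℝ)/2)) ≤ C := by
  rcases F.eq_empty_or_nonempty with hFe | hFne
  · exact ⟨1, one_pos, by simp [hFe]⟩
  obtain ⟨z₀, hz₀F, hz₀min'⟩ := hF.exists_isMinOn hFne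
    ((Continuous.min (by continuity) (by continuity)).continuousOn :
      ContinuousOn (fun z : ℂ => min (z.re - |z.im|) (2 - z.re - |z.im|)) F)
  have hz₀min := isMinOn_iff.mp hz₀min'
  set δ₀ := min (z₀.re - |z₀.im|) (2 - z₀.re - |z₀.im|) with hδ₀def
  have hδ₀ : 0 < δ₀ := by
    obtain ⟨ha, hb⟩ := hFD hz₀F
    exact lt_min (by linarith) (by linarith)
  set δ := min δ₀ 1 with hδdef
  have hδ0 : 0 < δ := lt_min hδ₀ one_pos
  have hδ1 : δ ≤ 1 := min_le_right _ _
  have hzF : ∀ z ∈ F, δ ≤ z.re - |z.im| ∧ δ ≤ 2 - z.re - |z.im| := by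
    intro z hz
    have h := hz₀min z hz
    have hδδ₀ : δ ≤ δ₀ := min_le_left _ _
    exact ⟨le_trans hδδ₀ (le_trans h (min_le_left _ _)),
      le_trans hδδ₀ (le_trans h (min_le_right _ _))⟩
  have hπ : (0:ℝ) < Real.pi := Real.pi_pos
  set c := δ^2 / (32*t) with hcdef
  have hc : 0 < c := by positivity
  set D := (t/Real.pi) * (48/δ^2)^3 with hDdef
  have hD : 0 < D := by positivity
  -- summability of the majorant
  have hnat : Summable fun n : ℕ => Real.exp (-c * ((n:ℤ):ℝ)^2) := by
    have hgeom : Summable fun n : ℕ => Real.exp (-c) ^ n :=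
      summable_geometric_of_lt_one (Real.exp_nonneg _) (Real.exp_lt_one_iff.mpr (by linarith))
    refine Summable.of_nonneg_of_le (fun n => (Real.exp_pos _).le) (fun n => ?_) hgeom
    · rw [← Real.exp_nat_mul]
      apply Real.exp_le_exp.mpr
      have h1 : (n:ℝ) ≤ (n:ℝ)^2 := by
        rcases Nat.eq_zero_or_pos n with h | h
        · simp [h]
        · have : (1:ℝ) ≤ (n:ℝ) := by exact_mod_cast h
          nlinarith
      push_cast
      nlinarith
  have hsumexp : Summable fun n : ℤ => Real.exp (-c * (n:ℝ)^2) := by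
    apply Summable.of_nat_of_neg hnat
    simpa using hnat
  set S := ∑' n : ℤ, Real.exp (-c * (n:ℝ)^2) with hSdef
  have hS0 : 0 ≤ S := tsum_nonneg fun n => (Real.exp_pos _).le
  set g : ℤ → ℝ := fun n => Real.sqrt D * Real.exp (-c * (n:ℝ)^2) with hgdef
  have hgsum : Summable g := hsumexp.mul_left _
  -- the key pointwise bound
  have key : ∀ z ∈ F, ∀ n : ℤ,
      (∫ τ in Set.Ioo (0:ℝ) t, ‖dxK (z + 2 * (n : ℂ)) (t - τ)‖ ^ 2) ^ ((1:ℝ)/2) ≤ g n := by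
    intro z hz n
    obtain ⟨hza, hzb⟩ := hzF z hz
    set x := z.re
    set y := z.im
    set m := (n:ℝ) with hmdef
    set w := z + 2 * (n:ℂ) with hwdef
    have hwre : w.re = x + 2*m := by simp [hwdef]; rfl
    have hwim : w.im = y := by simp [hwdef]; rfl
    set a := (x + 2*m)^2 - y^2 with hadef
    have haw : (w^2).re = a := by
      rw [sq, Complex.mul_re, hwre, hwim, hadef]; ring
    have halb : δ^2 * (1 + m^2) / 4 ≤ a := a_lb hδ0 hδ1 hza hzb n
    have hap : 0 < a := lt_of_lt_of_le (by positivity) halb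
    set Cn := ‖w‖^2/(16*Real.pi) * (12/a)^3 * Real.exp (-(a/(4*t))) with hCndef
    have hCn0 : 0 ≤ Cn := by positivity
    have hint : (∫ τ in Set.Ioo (0:ℝ) t, ‖dxK w (t - τ)‖ ^ 2) ≤ t * Cn := by
      have hconst : (∫ _ in Set.Ioo (0:ℝ) t, Cn) = t * Cn := by
        rw [setIntegral_const]
        simp [Real.volume_Ioo, ENNReal.toReal_ofReal ht.le, ht.le]
      refine le_trans (integral_mono_of_nonneg ?_ ?_ ?_) (le_of_eq hconst)
      · exact ae_of_all _ fun τ => by positivity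
      · exact integrableOn_const (by simp [Real.volume_Ioo])
      · filter_upwards [ae_restrict_mem measurableSet_Ioo] with τ hτ
        exact dxK_sq_le w haw hap (by linarith [hτ.2]) (by linarith [hτ.1])
    -- bound t * Cn by D * exp(-2c m²)
    have hwnorm : ‖w‖ ≤ 4*(1 + m^2) := by
      have h1 : ‖w‖ ≤ ‖z‖ + ‖2 * (n:ℂ)‖ := norm_add_le _ _
      have h2 : ‖(2 : ℂ) * (n:ℂ)‖ = 2 * |m| := by
        rw [norm_mul]
        simp [hmdef, Complex.norm_intCast]
      have h3 : ‖z‖ ≤ |x| + |y| := Complex.norm_le_abs_re_add_abs_im z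
      have hx2 : x < 2 := by have := abs_nonneg y; linarith
      have hx0 : 0 < x := lt_of_le_of_lt (abs_nonneg y) (by linarith : |y| < x)
      have hy1 : |y| ≤ 1 := by linarith
      have habs : |x| ≤ 2 := abs_le.mpr ⟨by linarith, by linarith⟩
      have h4 : 2 * |m| ≤ 1 + m^2 := by nlinarith [sq_nonneg (|m| - 1), _root_.sq_abs m]
      have : ‖w‖ ≤ 3 + 2*|m| := by rw [h2] at h1; linarith
      nlinarith [sq_nonneg m, abs_nonneg m]
    have hexpb : Real.exp (-(a/(4*t))) ≤ Real.exp (-(2*c*m^2)) := by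
      apply Real.exp_le_exp.mpr
      rw [neg_le_neg_iff]
      have : 2*c*m^2 = δ^2*m^2/(16*t) := by rw [hcdef]; field_simp; ring
      rw [this]
      rw [div_le_div_iff₀ (by positivity) (by positivity)]
      nlinarith [sq_nonneg m, mul_nonneg (mul_nonneg (sq_nonneg δ) (sq_nonneg m)) ht.le]
    have h12a : (12/a)^3 ≤ (48/(δ^2*(1+m^2)))^3 := by
      apply pow_le_pow_left₀ (by positivity)
      rw [div_le_div_iff₀ hap (by positivity)]
      nlinarith
    have htCn : t * Cn ≤ D * Real.exp (-(2*c*m^2)) := by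
      have step1 : t * Cn ≤ t * ((4*(1+m^2))^2/(16*Real.pi) * (48/(δ^2*(1+m^2)))^3
          * Real.exp (-(2*c*m^2))) := by
        have e1 : ‖w‖^2 ≤ (4*(1+m^2))^2 := pow_le_pow_left₀ (norm_nonneg _) hwnorm 2
        have eA : ‖w‖^2/(16*Real.pi) ≤ (4*(1+m^2))^2/(16*Real.pi) :=
          (div_le_div_iff_of_pos_right (by positivity)).mpr e1
        have eB : ‖w‖^2/(16*Real.pi) * (12/a)^3
            ≤ (4*(1+m^2))^2/(16*Real.pi) * (48/(δ^2*(1+m^2)))^3 :=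
          mul_le_mul eA h12a (pow_nonneg (div_nonneg (by norm_num) hap.le) 3) (by positivity)
        have eC : Cn ≤ (4*(1+m^2))^2/(16*Real.pi) * (48/(δ^2*(1+m^2)))^3
            * Real.exp (-(2*c*m^2)) := by
          rw [hCndef]
          exact mul_le_mul eB hexpb (Real.exp_pos _).le (by positivity)
        exact mul_le_mul_of_nonneg_left eC ht.le
      have h1m : (0:ℝ) < 1 + m^2 := by positivity
      have step2 : t * ((4*(1+m^2))^2/(16*Real.pi) * (48/(δ^2*(1+m^2)))^3) = D / (1 + m^2) := by
        rw [hDdef]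
        exact coeff_eq hπ.ne' (pow_ne_zero 2 hδ0.ne') h1m.ne'
      calc t * Cn ≤ t * ((4*(1+m^2))^2/(16*Real.pi) * (48/(δ^2*(1+m^2)))^3
          * Real.exp (-(2*c*m^2))) := step1
        _ = D / (1 + m^2) * Real.exp (-(2*c*m^2)) := by rw [← step2]; ring
        _ ≤ D * Real.exp (-(2*c*m^2)) := by
            apply mul_le_mul_of_nonneg_right _ (Real.exp_pos _).le
            exact div_le_self hD.le (by linarith [sq_nonneg m])

    have hrpow : (D * Real.exp (-(2*c*m^2)))^((1:ℝ)/2) = g n := by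
      have hsq : D * Real.exp (-(2*c*m^2)) = (Real.sqrt D * Real.exp (-c*m^2))^2 := by
        rw [mul_pow, Real.sq_sqrt hD.le, ← Real.exp_nat_mul]
        congr 1
        push_cast
        ring
      rw [hsq, ← Real.rpow_natCast (Real.sqrt D * Real.exp (-c*m^2)) 2,
        ← Real.rpow_mul (by positivity)]
      norm_num [hgdef]
      exact Or.inl (Or.inl rfl)
    calc (∫ τ in Set.Ioo (0:ℝ) t, ‖dxK w (t - τ)‖ ^ 2) ^ ((1:ℝ)/2)
        ≤ (D * Real.exp (-(2*c*m^2)))^((1:ℝ)/2) := by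
          apply Real.rpow_le_rpow (integral_nonneg fun τ => by positivity)
            (hint.trans htCn) (by norm_num)
      _ = g n := hrpow
  refine ⟨Real.sqrt D * S + 1, by nlinarith [Real.sqrt_nonneg D], fun z hz => ?_⟩
  have hsummable : Summable (fun n : ℤ =>
      (∫ τ in Set.Ioo (0:ℝ) t, ‖dxK (z + 2 * (n : ℂ)) (t - τ)‖ ^ 2) ^ ((1:ℝ)/2)) :=
    Summable.of_nonneg_of_le
      (fun n => Real.rpow_nonneg (integral_nonneg fun τ => by positivity) _)
      (key z hz) hgsum
  refine ⟨hsummable, ?_⟩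
  calc (∑' n : ℤ, (∫ τ in Set.Ioo (0:ℝ) t, ‖dxK (z + 2 * (n : ℂ)) (t - τ)‖ ^ 2) ^ ((1:ℝ)/2))
      ≤ ∑' n : ℤ, g n := Summable.tsum_le_tsum (key z hz) hsummable hgsum
    _ = Real.sqrt D * S := by rw [hgdef, tsum_mul_left]
    _ ≤ Real.sqrt D * S + 1 := by linarith
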